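/- The set of logarithms of strictly positive points of the power region, L = {(log p_1,…,log p_K) : p ∈ P_SIR, p_i > 0 for all i}, is a convex subset of ℝ^K. -/

import Mathlib

open Matrix BigOperators

/-- Signal-to-interference ratio of user `i`. -/
noncomputable def SIR {K : ℕ} (A : Matrix (Fin K) (Fin K) ℝ) (C : Fin K → ℝ)
    (σ2 : ℝ) (p : Fin K → ℝ) (i : Fin K) : ℝ :=
  A i i * p i / ((∑ j ∈ Finset.univ.erase i, A i j * p j) + C i * σ2)

/-- The power region. -/
noncomputable def PSIR {K : ℕ} (A : Matrix (Fin K) (Fin K) ℝ) (C : Fin K → ℝ)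
    (σ2 : ℝ) (γ : Fin K → ℝ) : Set (Fin K → ℝ) :=
  {p | (∀ i, 0 ≤ p i) ∧ ∀ i, γ i ≤ SIR A C σ2 p i}

/-- Auxiliary convex function: normalised interference in the log domain. -/
noncomputable def gfun {K : ℕ} (A : Matrix (Fin K) (Fin K) ℝ) (C : Fin K → ℝ)
    (σ2 : ℝ) (γ : Fin K → ℝ) (i : Fin K) (x : Fin K → ℝ) : ℝ :=
  (∑ j ∈ Finset.univ.erase i, (γ i * A i j / A i i) * Real.exp (x j - x i))
    + (γ i * C i * σ2 / A i i) * Real.exp (-(x i))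

lemma gfun_mul {K : ℕ} (A : Matrix (Fin K) (Fin K) ℝ) (C : Fin K → ℝ)
    (σ2 : ℝ) (γ : Fin K → ℝ) (i : Fin K) (x : Fin K → ℝ) (hAd : A i i ≠ 0) :
    gfun A C σ2 γ i x * (A i i * Real.exp (x i))
      = γ i * ((∑ j ∈ Finset.univ.erase i, A i j * Real.exp (x j)) + C i * σ2) := by
  have hterm : ∀ j ∈ Finset.univ.erase i,
      (γ i * A i j / A i i) * Real.exp (x j - x i) * (A i i * Real.exp (x i))
        = γ i * (A i j * Real.exp (x j)) := by
    intro j _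
    rw [Real.exp_sub]
    field_simp
  have hlast : (γ i * C i * σ2 / A i i) * Real.exp (-(x i)) * (A i i * Real.exp (x i))
      = γ i * (C i * σ2) := by
    rw [Real.exp_neg]
    have := Real.exp_pos (x i)
    field_simp
  rw [gfun, add_mul, Finset.sum_mul, Finset.sum_congr rfl hterm, ← Finset.mul_sum, hlast,
    mul_add]

lemma gfun_convex {K : ℕ} (A : Matrix (Fin K) (Fin K) ℝ) (C : Fin K → ℝ)
    (σ2 : ℝ) (γ : Fin K → ℝ) (i : Fin K)
    (hA : ∀ i j, 0 ≤ A i j) (hAd : ∀ i, 0 < A i i)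
    (hC : ∀ i, 0 < C i) (hσ : 0 < σ2) (hγ : ∀ i, 0 < γ i) :
    Convex ℝ {x : Fin K → ℝ | gfun A C σ2 γ i x ≤ 1} := by
  intro x hx y hy a b ha hb hab
  have key : ∀ (c u v : ℝ), 0 ≤ c →
      c * Real.exp (a * u + b * v) ≤ a * (c * Real.exp u) + b * (c * Real.exp v) := by
    intro c u v hc
    have h := convexOn_exp.2 (Set.mem_univ u) (Set.mem_univ v) ha hb hab
    simp only [smul_eq_mul] at h
    nlinarith [h, mul_le_mul_of_nonneg_left h hc]
  have hz : gfun A C σ2 γ i (a • x + b • y)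
      ≤ a * gfun A C σ2 γ i x + b * gfun A C σ2 γ i y := by
    unfold gfun
    have h1 : ∀ j ∈ Finset.univ.erase i,
        (γ i * A i j / A i i) * Real.exp ((a • x + b • y) j - (a • x + b • y) i)
          ≤ a * ((γ i * A i j / A i i) * Real.exp (x j - x i))
            + b * ((γ i * A i j / A i i) * Real.exp (y j - y i)) := by
      intro j _
      have hc : 0 ≤ γ i * A i j / A i i :=
        div_nonneg (mul_nonneg (hγ i).le (hA i j)) (hAd i).le
      have harg : (a • x + b • y) j - (a • x + b • y) i
          = a * (x j - x i) + b * (y j - y i) := by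
        simp [Pi.add_apply, Pi.smul_apply, smul_eq_mul]; ring
      rw [harg]; exact key _ _ _ hc
    have h2 : (γ i * C i * σ2 / A i i) * Real.exp (-((a • x + b • y) i))
        ≤ a * ((γ i * C i * σ2 / A i i) * Real.exp (-(x i)))
          + b * ((γ i * C i * σ2 / A i i) * Real.exp (-(y i))) := by
      have hc : 0 ≤ γ i * C i * σ2 / A i i :=
        div_nonneg (mul_nonneg (mul_nonneg (hγ i).le (hC i).le) hσ.le) (hAd i).le
      have harg : -((a • x + b • y) i) = a * (-(x i)) + b * (-(y i)) := by
        simp [Pi.add_apply, Pi.smul_apply, smul_eq_mul]; ring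
      rw [harg]; exact key _ _ _ hc
    have hsum := Finset.sum_le_sum h1
    rw [Finset.sum_add_distrib, ← Finset.mul_sum, ← Finset.mul_sum] at hsum
    linarith
  have hx' : gfun A C σ2 γ i x ≤ 1 := hx
  have hy' : gfun A C σ2 γ i y ≤ 1 := hy
  have : a * gfun A C σ2 γ i x + b * gfun A C σ2 γ i y ≤ 1 := by
    nlinarith
  exact le_trans hz this

/-- The set of componentwise logarithms of strictly positive points of the power
region is convex. -/
theorem log_power_region_convex {K : ℕ} (hK : 1 ≤ K)
    (A : Matrix (Fin K) (Fin K) ℝ) (C : Fin K → ℝ) (σ2 : ℝ) (γ : Fin K → ℝ)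
    (hA : ∀ i j, 0 ≤ A i j) (hAd : ∀ i, 0 < A i i)
    (hC : ∀ i, 0 < C i) (hσ : 0 < σ2) (hγ : ∀ i, 0 < γ i) :
    Convex ℝ ((fun p : Fin K → ℝ => fun i => Real.log (p i)) ''
      {p ∈ PSIR A C σ2 γ | ∀ i, 0 < p i}) := by
  have hset : ((fun p : Fin K → ℝ => fun i => Real.log (p i)) ''
      {p ∈ PSIR A C σ2 γ | ∀ i, 0 < p i})
      = ⋂ i : Fin K, {x : Fin K → ℝ | gfun A C σ2 γ i x ≤ 1} := by
    ext x
    simp only [Set.mem_image, Set.mem_iInter, Set.mem_setOf_eq]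
    constructor
    · rintro ⟨p, ⟨⟨hnn, hsir⟩, hpos⟩, rfl⟩ i
      have hexp : ∀ j, Real.exp (Real.log (p j)) = p j := fun j => Real.exp_log (hpos j)
      have hD : 0 < (∑ j ∈ Finset.univ.erase i, A i j * p j) + C i * σ2 := by
        have : 0 ≤ ∑ j ∈ Finset.univ.erase i, A i j * p j :=
          Finset.sum_nonneg fun j _ => mul_nonneg (hA i j) (hnn j)
        nlinarith [hC i]
      have hsir' := hsir i
      rw [SIR, le_div_iff₀ hD] at hsir'
      have hmul := gfun_mul A C σ2 γ i (fun j => Real.log (p j)) (hAd i).ne'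
      simp only [hexp] at hmul
      have hpos' : 0 < A i i * p i := mul_pos (hAd i) (hpos i)
      rw [← hmul] at hsir'
      rw [← mul_le_mul_iff_of_pos_right hpos', one_mul]
      exact hsir'
    · intro hg
      refine ⟨fun j => Real.exp (x j), ⟨⟨fun i => (Real.exp_pos _).le, fun i => ?_⟩,
        fun i => Real.exp_pos _⟩, ?_⟩
      · have hmul := gfun_mul A C σ2 γ i x (hAd i).ne'
        have hD : 0 < (∑ j ∈ Finset.univ.erase i, A i j * Real.exp (x j)) + C i * σ2 := by
          have : 0 ≤ ∑ j ∈ Finset.univ.erase i, A i j * Real.exp (x j) :=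
            Finset.sum_nonneg fun j _ => mul_nonneg (hA i j) (Real.exp_pos _).le
          nlinarith [hC i]
        rw [SIR, le_div_iff₀ hD]
        have hpos' : 0 < A i i * Real.exp (x i) := mul_pos (hAd i) (Real.exp_pos _)
        have := mul_le_mul_of_nonneg_right (hg i) hpos'.le
        rw [hmul, one_mul] at this
        exact this
      · funext j
        simp [Real.log_exp]
  rw [hset]
  exact convex_iInter fun i => gfun_convex A C σ2 γ i hA hAd hC hσ hγ
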